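/- Let α be a Lebesgue (1,∞)-atom on ℝⁿ associated to a ball B' admissible at scale 2 (supp α ⊆ B', ∫α dλ = 0, ‖α‖_∞ ≤ λ(B')^{-1}). Then a := α/γ₀ satisfies ∫ a dγ = 0 and ‖a‖_{L^∞} ≤ C·γ(B')^{-1}; that is, a is C times a Gaussian (1,∞)-atom (at scale 2), with C depending only on n. -/

import Mathlib

open MeasureTheory
open scoped ENNReal

/-- Gaussian density `γ₀(x) = π^{-n/2} e^{-|x|²}` on ℝⁿ. -/
noncomputable def gaussDensity (n : ℕ) (x : EuclideanSpace ℝ (Fin n)) : ℝ :=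
  Real.pi ^ (-(n : ℝ) / 2) * Real.exp (-‖x‖ ^ 2)

/-- The Gauss measure `γ` on ℝⁿ. -/
noncomputable def gaussMeasure (n : ℕ) : Measure (EuclideanSpace ℝ (Fin n)) :=
  volume.withDensity fun x => ENNReal.ofReal (gaussDensity n x)

/-- `mrad t = min(1, 1/t)`, equal to `1` when `t ≤ 1`. -/
noncomputable def mrad (t : ℝ) : ℝ := if t ≤ 1 then 1 else 1 / t

lemma gaussDensity_pos (n : ℕ) (x : EuclideanSpace ℝ (Fin n)) : 0 < gaussDensity n x := by
  unfold gaussDensity; positivity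

lemma gaussDensity_continuous (n : ℕ) : Continuous (gaussDensity n) := by
  unfold gaussDensity
  exact continuous_const.mul (Real.continuous_exp.comp (by fun_prop))

theorem stmt_17 (n : ℕ) :
    ∃ C > 0, ∀ (c' : EuclideanSpace ℝ (Fin n)) (r : ℝ)
      (α : EuclideanSpace ℝ (Fin n) → ℝ),
      0 < r → r ≤ 2 * mrad ‖c'‖ →
      Function.support α ⊆ Metric.closedBall c' r →
      Integrable α volume →
      (∫ x, α x) = 0 →
      (∀ x, |α x| ≤ ((volume (Metric.closedBall c' r)).toReal)⁻¹) →
      (∫ x, α x / gaussDensity n x ∂gaussMeasure n) = 0 ∧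
        ∀ x, |α x / gaussDensity n x| ≤
          C * ((gaussMeasure n (Metric.closedBall c' r)).toReal)⁻¹ := by
  refine ⟨Real.exp 24, Real.exp_pos _, ?_⟩
  intro c' r α hr hr2 hsupp hint hzero hbound
  set B := Metric.closedBall c' r with hB
  set g := gaussDensity n with hg
  have gpos := gaussDensity_pos n
  -- basic size bounds
  have hr2' : r ≤ 2 := by
    rcases le_or_gt ‖c'‖ 1 with h | h
    · simpa [mrad, h] using hr2
    · have : mrad ‖c'‖ = 1 / ‖c'‖ := by simp [mrad, not_le.2 h]
      rw [this] at hr2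
      have h0 : 0 < ‖c'‖ := lt_trans one_pos h
      calc r ≤ 2 * (1 / ‖c'‖) := hr2
        _ ≤ 2 * 1 := by
            have : 1 / ‖c'‖ ≤ 1 := by
              rw [div_le_one h0]; exact h.le
            linarith
        _ = 2 := by ring
  have hrc : r * ‖c'‖ ≤ 2 := by
    rcases le_or_gt ‖c'‖ 1 with h | h
    · nlinarith [norm_nonneg c']
    · have : mrad ‖c'‖ = 1 / ‖c'‖ := by simp [mrad, not_le.2 h]
      rw [this] at hr2
      have h0 : 0 < ‖c'‖ := lt_trans one_pos h
      have := mul_le_mul_of_nonneg_right hr2 (norm_nonneg c')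
      calc r * ‖c'‖ ≤ 2 * (1 / ‖c'‖) * ‖c'‖ := this
        _ = 2 := by field_simp
  -- density comparison on the ball
  have hratio : ∀ x ∈ B, ∀ y ∈ B, g y ≤ Real.exp 24 * g x := by
    intro x hx y hy
    have hx' : |‖x‖ - ‖c'‖| ≤ r := by
      calc |‖x‖ - ‖c'‖| ≤ ‖x - c'‖ := abs_norm_sub_norm_le x c'
        _ ≤ r := by rwa [← dist_eq_norm, ← Metric.mem_closedBall]
    have hy' : |‖y‖ - ‖c'‖| ≤ r := by
      calc |‖y‖ - ‖c'‖| ≤ ‖y - c'‖ := abs_norm_sub_norm_le y c'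
        _ ≤ r := by rwa [← dist_eq_norm, ← Metric.mem_closedBall]
    have hx1 : ‖x‖ ≤ ‖c'‖ + r := by have := abs_le.1 hx'; linarith [this.2]
    have hy1 : ‖c'‖ - r ≤ ‖y‖ := by have := abs_le.1 hy'; linarith [this.1]
    have hkey : ‖x‖ ^ 2 ≤ ‖y‖ ^ 2 + 24 := by
      nlinarith [norm_nonneg x, norm_nonneg y, norm_nonneg c', sq_nonneg (‖c'‖ - r),
        sq_nonneg (‖x‖ - ‖y‖), sq_nonneg (‖x‖ + ‖y‖)]
    have : Real.exp (-‖y‖ ^ 2) ≤ Real.exp 24 * Real.exp (-‖x‖ ^ 2) := by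
      rw [← Real.exp_add]
      exact Real.exp_le_exp.2 (by linarith)
    have hc : (0:ℝ) < Real.pi ^ (-(n : ℝ) / 2) := by positivity
    simp only [hg, gaussDensity]
    calc Real.pi ^ (-(n : ℝ) / 2) * Real.exp (-‖y‖ ^ 2)
        ≤ Real.pi ^ (-(n : ℝ) / 2) * (Real.exp 24 * Real.exp (-‖x‖ ^ 2)) :=
          mul_le_mul_of_nonneg_left this hc.le
      _ = Real.exp 24 * (Real.pi ^ (-(n : ℝ) / 2) * Real.exp (-‖x‖ ^ 2)) := by ring
  have hmeasB : MeasurableSet B := measurableSet_closedBall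
  have hgmeas : Measurable fun x => ENNReal.ofReal (g x) :=
    ENNReal.measurable_ofReal.comp (gaussDensity_continuous n).measurable
  have hGB : gaussMeasure n B = ∫⁻ y in B, ENNReal.ofReal (g y) ∂volume := by
    rw [gaussMeasure, withDensity_apply _ hmeasB]
  have hcB : c' ∈ B := Metric.mem_closedBall_self hr.le
  -- upper bound for the gauss measure of the ball
  have hGB_ub : ∀ x ∈ B, gaussMeasure n B ≤ ENNReal.ofReal (Real.exp 24 * g x) * volume B := by
    intro x hx
    rw [hGB]
    calc ∫⁻ y in B, ENNReal.ofReal (g y) ∂volume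
        ≤ ∫⁻ _ in B, ENNReal.ofReal (Real.exp 24 * g x) ∂volume :=
          setLIntegral_mono measurable_const
            (fun y hy => ENNReal.ofReal_le_ofReal (hratio x hx y hy))
      _ = ENNReal.ofReal (Real.exp 24 * g x) * volume B := by
          rw [setLIntegral_const]
  -- lower bound
  have hGB_lb : ENNReal.ofReal (Real.exp (-24) * g c') * volume B ≤ gaussMeasure n B := by
    rw [hGB]
    calc ENNReal.ofReal (Real.exp (-24) * g c') * volume B
        = ∫⁻ _ in B, ENNReal.ofReal (Real.exp (-24) * g c') ∂volume := by
          rw [setLIntegral_const]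
      _ ≤ ∫⁻ y in B, ENNReal.ofReal (g y) ∂volume := by
          refine setLIntegral_mono hgmeas (fun y hy => ENNReal.ofReal_le_ofReal ?_)
          have := hratio y hy c' hcB
          rw [Real.exp_neg]
          rw [inv_mul_le_iff₀ (Real.exp_pos 24)] at *
          linarith [this]
  have hvol_fin : volume B ≠ ⊤ := (measure_closedBall_lt_top).ne
  have hvol_pos : 0 < volume B := Metric.measure_closedBall_pos _ _ hr
  have hvolT_pos : 0 < (volume B).toReal := ENNReal.toReal_pos hvol_pos.ne' hvol_fin
  have hGB_fin : gaussMeasure n B ≠ ⊤ := by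
    refine ne_top_of_le_ne_top ?_ (hGB_ub c' hcB)
    exact ENNReal.mul_ne_top ENNReal.ofReal_ne_top hvol_fin
  have hGB_pos : 0 < gaussMeasure n B := by
    refine lt_of_lt_of_le ?_ hGB_lb
    apply ENNReal.mul_pos
    · simp only [ne_eq, ENNReal.ofReal_eq_zero, not_le]
      exact mul_pos (Real.exp_pos _) (gpos c')
    · exact hvol_pos.ne'
  have hGT_pos : 0 < (gaussMeasure n B).toReal := ENNReal.toReal_pos hGB_pos.ne' hGB_fin
  constructor
  · -- integral is zero
    have hg_meas : Measurable fun x => (g x).toNNReal :=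
      measurable_real_toNNReal.comp (gaussDensity_continuous n).measurable
    have heq : gaussMeasure n = volume.withDensity fun x => ((g x).toNNReal : ℝ≥0∞) := rfl
    rw [heq, integral_withDensity_eq_integral_smul hg_meas]
    have : ∀ x, ((g x).toNNReal) • (α x / g x) = α x := by
      intro x
      rw [NNReal.smul_def, Real.coe_toNNReal _ (gpos x).le, smul_eq_mul, mul_comm,
        div_mul_cancel₀ _ (gpos x).ne']
    simp_rw [this]
    exact hzero
  · -- pointwise bound
    intro x
    by_cases hax : α x = 0
    · rw [hax]
      simp only [zero_div, abs_zero]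
      exact mul_nonneg (Real.exp_pos _).le (inv_nonneg.2 ENNReal.toReal_nonneg)
    · have hx : x ∈ B := hsupp hax
      have h1 : (gaussMeasure n B).toReal ≤ Real.exp 24 * g x * (volume B).toReal := by
        have := hGB_ub x hx
        have h2 : (gaussMeasure n B).toReal ≤
            (ENNReal.ofReal (Real.exp 24 * g x) * volume B).toReal :=
          ENNReal.toReal_mono (ENNReal.mul_ne_top ENNReal.ofReal_ne_top hvol_fin) this
        rwa [ENNReal.toReal_mul, ENNReal.toReal_ofReal (mul_pos (Real.exp_pos 24) (gpos x)).le] at h2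
      have h3 : |α x / g x| ≤ ((volume B).toReal)⁻¹ / g x := by
        rw [abs_div, abs_of_pos (gpos x)]
        gcongr
        · exact (gpos x).le
        · exact hbound x
      refine h3.trans ?_
      have e24 := Real.exp_pos 24
      calc ((volume B).toReal)⁻¹ / g x
          = Real.exp 24 * (Real.exp 24 * g x * (volume B).toReal)⁻¹ := by
            rw [eq_comm]
            field_simp
        _ ≤ Real.exp 24 * ((gaussMeasure n B).toReal)⁻¹ := by
            gcongr
        _ = Real.exp 24 * ((gaussMeasure n (Metric.closedBall c' r)).toReal)⁻¹ := rfl
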